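/- arXiv:2304.03455 — 5 statements merged into one kernel-verified Lean document; each statement's English description precedes it below -/
import Mathlib

section
/- If X is a separable metrizable space whose set of non-isolated points is compact, then the hyperspace (CL(X), τ_V) is quasi-metrizable. -/
open Set TopologicalSpace

/-- The hyperspace of nonempty closed subsets of `X`. -/
structure CL (X : Type*) [TopologicalSpace X] where
  carrier : Set X
  nonempty' : carrier.Nonempty
  isClosed' : IsClosed carrier

/-- A quasi-metric: like a metric but without symmetry. -/
def IsQuasiMetric {X : Type*} (d : X → X → ℝ) : Prop :=
  (∀ x y, 0 ≤ d x y) ∧ (∀ x y, d x y = 0 ↔ x = y) ∧ (∀ x y z, d x z ≤ d x y + d y z)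

/-- A space is quasi-metrizable if the balls of some quasi-metric generate its topology. -/
def QuasiMetrizable (X : Type*) [TopologicalSpace X] : Prop :=
  ∃ d : X → X → ℝ, IsQuasiMetric d ∧
    ∀ s : Set X, IsOpen s ↔ ∀ x ∈ s, ∃ ε > 0, {y | d x y < ε} ⊆ s

/-- The set of non-isolated points of `X`. -/
def NI (X : Type*) [TopologicalSpace X] : Set X := {x | ¬ IsOpen ({x} : Set X)}

/-- A subset is countably compact if every countable open cover has a finite subcover. -/
def CountablyCompactSet {Y : Type*} [TopologicalSpace Y] (s : Set Y) : Prop :=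
  ∀ f : ℕ → Set Y, (∀ n, IsOpen (f n)) → s ⊆ ⋃ n, f n → ∃ t : Finset ℕ, s ⊆ ⋃ n ∈ t, f n

/-- A space is hemicompact if some sequence of compact sets is cofinal in the compact sets. -/
def Hemicompact (X : Type*) [TopologicalSpace X] : Prop :=
  ∃ K : ℕ → Set X, (∀ n, IsCompact (K n)) ∧ ∀ L : Set X, IsCompact L → ∃ n, L ⊆ K n

/-- The Vietoris topology on `CL X`, generated by `U⁺` and `U⁻` for `U` open. -/
def vietorisTop (X : Type*) [TopologicalSpace X] : TopologicalSpace (CL X) :=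
  generateFrom
    ({S | ∃ U : Set X, IsOpen U ∧ S = {A : CL X | A.carrier ⊆ U}} ∪
     {S | ∃ U : Set X, IsOpen U ∧ S = {A : CL X | (A.carrier ∩ U).Nonempty}})

noncomputable instance (X : Type*) [TopologicalSpace X] : TopologicalSpace (CL X) :=
  vietorisTop X

theorem quasiMetrizable_of_g {Y : Type*} [TopologicalSpace Y] (g : ℕ → Y → Set Y)
    (hself : ∀ n A, A ∈ g n A)
    (hanti : ∀ {m n : ℕ} (A), m ≤ n → g n A ⊆ g m A)
    (htrans : ∀ n A B, B ∈ g n A → g n B ⊆ g n A)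
    (hsep : ∀ A B, (∀ n, B ∈ g n A) → A = B)
    (hbase : ∀ A s, IsOpen s → A ∈ s → ∃ n, g n A ⊆ s)
    (hnbhd : ∀ n A, ∃ O, IsOpen O ∧ A ∈ O ∧ O ⊆ g n A) :
    QuasiMetrizable Y := by
  classical
  set f : Y → Y → ℕ → ℝ := fun A B n => if B ∈ g n A then 0 else (1/2:ℝ)^(n+1) with hf
  have hgeo : Summable (fun n : ℕ => (1/2:ℝ)^(n+1)) := by
    simpa using summable_geometric_two.mul_right (1/2:ℝ) |>.congr (fun n => (by ring : (1/2:ℝ)^n * (1/2) = (1/2:ℝ)^(n+1)))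
  have hfnonneg : ∀ A B n, 0 ≤ f A B n := by
    intro A B n; simp only [hf]; split <;> positivity
  have hfle : ∀ A B n, f A B n ≤ (1/2:ℝ)^(n+1) := by
    intro A B n; simp only [hf]; split
    · positivity
    · exact le_refl _
  have hsum : ∀ A B, Summable (f A B) :=
    fun A B => Summable.of_nonneg_of_le (hfnonneg A B) (hfle A B) hgeo
  set d : Y → Y → ℝ := fun A B => ∑' n, f A B n with hd
  have hdnonneg : ∀ A B, 0 ≤ d A B := fun A B => tsum_nonneg (hfnonneg A B)
  -- if B ∈ g n A then d A B ≤ (1/2)^(n+1)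
  have hdle : ∀ n A B, B ∈ g n A → d A B ≤ (1/2:ℝ)^(n+1) := by
    intro n A B hB
    have h1 : d A B ≤ ∑' m, (if m ≤ n then 0 else (1/2:ℝ)^(m+1)) := by
      apply Summable.tsum_le_tsum _ (hsum A B)
      · apply Summable.of_nonneg_of_le _ _ hgeo
        · intro m; split <;> positivity
        · intro m; split
          · positivity
          · exact le_refl _
      · intro m
        by_cases hm : m ≤ n
        · have : B ∈ g m A := hanti A hm hB
          simp [hf, hm, this]
        · simp only [hf, hm, if_false]
          exact hfle A B m
    refine h1.trans ?_
    have hs2 : Summable (fun m : ℕ => (if m ≤ n then 0 else (1/2:ℝ)^(m+1))) := by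
      apply Summable.of_nonneg_of_le _ _ hgeo
      · intro m; split <;> positivity
      · intro m; split
        · positivity
        · exact le_refl _
    rw [← Summable.sum_add_tsum_nat_add (n+1) hs2]
    have h2 : (∑ m ∈ Finset.range (n+1), (if m ≤ n then 0 else (1/2:ℝ)^(m+1))) = 0 := by
      apply Finset.sum_eq_zero
      intro m hm
      simp [Nat.lt_succ_iff.mp (Finset.mem_range.mp hm)]
    rw [h2, zero_add]
    apply le_of_eq
    have h3 : ∀ m : ℕ, (if m + (n+1) ≤ n then 0 else (1/2:ℝ)^(m+(n+1)+1)) = (1/2:ℝ)^(n+2) * (1/2:ℝ)^m := by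
      intro m
      have : ¬ (m + (n+1) ≤ n) := by omega
      rw [if_neg this]; ring
    calc ∑' m, (if m + (n+1) ≤ n then 0 else (1/2:ℝ)^(m+(n+1)+1))
        = ∑' m, (1/2:ℝ)^(n+2) * (1/2:ℝ)^m := by exact tsum_congr h3
      _ = (1/2:ℝ)^(n+2) * 2 := by rw [tsum_mul_left, tsum_geometric_two]
      _ = (1/2:ℝ)^(n+1) := by ring
  have hdge : ∀ n A B, B ∉ g n A → (1/2:ℝ)^(n+1) ≤ d A B := by
    intro n A B hB
    have h' := Summable.le_tsum (hsum A B) n (fun m _ => hfnonneg A B m)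
    have h2 : f A B n = (1/2:ℝ)^(n+1) := by simp [hf, hB]
    exact h2 ▸ h'
  refine ⟨d, ⟨hdnonneg, ?_, ?_⟩, ?_⟩
  · -- d = 0 iff eq
    intro A B
    constructor
    · intro h0
      apply hsep
      intro n
      by_contra hB
      have := hdge n A B hB
      rw [h0] at this
      have : (0:ℝ) < (1/2:ℝ)^(n+1) := by positivity
      linarith [hdge n A B hB, h0 ▸ (hdge n A B hB)]
    · rintro rfl
      have : ∀ n, f A A n = 0 := fun n => by simp [hf, hself]
      simp [hd, this]
  · -- triangle
    intro A B C
    have := Summable.tsum_add (hsum A B) (hsum B C)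
    rw [hd]
    simp only
    rw [← this]
    apply Summable.tsum_le_tsum _ (hsum A C) ((hsum A B).add (hsum B C))
    intro n
    by_cases hC : C ∈ g n A
    · simp only [hf, hC, if_pos]
      positivity
    · by_cases hB : B ∈ g n A
      · have hCB : C ∉ g n B := fun h => hC (htrans n A B hB h)
        simp only [hf, if_neg hC, if_neg hCB]
        have : (0:ℝ) ≤ if B ∈ g n A then 0 else (1/2:ℝ)^(n+1) := by split <;> positivity
        linarith
      · simp only [hf, if_neg hC, if_neg hB]
        have : (0:ℝ) ≤ if C ∈ g n B then 0 else (1/2:ℝ)^(n+1) := by split <;> positivity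
        linarith
  · -- topology
    intro s
    constructor
    · intro hs A hA
      obtain ⟨n, hn⟩ := hbase A s hs hA
      refine ⟨(1/2:ℝ)^(n+1), by positivity, ?_⟩
      intro B hB
      apply hn
      by_contra hBn
      exact absurd (lt_of_le_of_lt (hdge n A B hBn) hB) (lt_irrefl _)
    · intro h
      rw [isOpen_iff_forall_mem_open]
      intro A hA
      obtain ⟨ε, hε, hball⟩ := h A hA
      obtain ⟨n, hn⟩ := exists_pow_lt_of_lt_one hε (by norm_num : (1/2:ℝ) < 1)
      obtain ⟨O, hO, hAO, hOg⟩ := hnbhd n A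
      refine ⟨O, ?_, hO, hAO⟩
      intro B hB
      apply hball
      have h1 : d A B ≤ (1/2:ℝ)^(n+1) := hdle n A B (hOg hB)
      have h2 : (1/2:ℝ)^(n+1) ≤ (1/2:ℝ)^n := by
        apply pow_le_pow_of_le_one (by norm_num) (by norm_num)
        omega
      exact lt_of_le_of_lt (h1.trans h2) hn

private lemma CL.ext' {X : Type*} [TopologicalSpace X] {A B : CL X}
    (h : A.carrier = B.carrier) : A = B := by
  cases A; cases B; cases h; rfl

section Construction
variable {X : Type*} [MetricSpace X]

private lemma pow_half_pos (m : ℕ) : (0:ℝ) < (1/2)^m := by positivity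

private lemma pow_half_anti {m n : ℕ} (h : m ≤ n) : ((1:ℝ)/2)^n ≤ (1/2)^m :=
  pow_le_pow_of_le_one (by norm_num) (by norm_num) h

/-- x is within (1/2)^m of the compact set K -/
private def near (K : Set X) (m : ℕ) (x : X) : Prop := ∃ k ∈ K, dist x k ≤ (1/2:ℝ)^m

private lemma near_anti {K : Set X} {m n : ℕ} (h : m ≤ n) {x : X} (hx : near K n x) :
    near K m x := by
  obtain ⟨k, hk, hd⟩ := hx
  exact ⟨k, hk, hd.trans (pow_half_anti h)⟩

private def Wb (m : ℕ) (T : Finset X) : Set X := ⋃ f ∈ T, Metric.ball f (4*(1/2:ℝ)^m)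

private lemma isOpen_Wb (m : ℕ) (T : Finset X) : IsOpen (Wb m T) :=
  isOpen_biUnion fun _ _ => Metric.isOpen_ball

private lemma isClosed_near {K : Set X} (hK : IsCompact K) (m : ℕ) :
    IsClosed {x | near K m x} := by
  have h : {x : X | near K m x} = Metric.cthickening ((1/2:ℝ)^m) K := by
    rw [hK.cthickening_eq_biUnion_closedBall (le_of_lt (pow_half_pos m))]
    ext x
    simp only [near, mem_setOf_eq, mem_iUnion, Metric.mem_closedBall, exists_prop]
  rw [h]
  exact Metric.isClosed_cthickening

variable (V : ℕ → Set X) (F : ℕ → Finset X)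

private def condL (m : ℕ) (A B : CL X) : Prop :=
  ∀ j ≤ m, (A.carrier ∩ V j).Nonempty → (B.carrier ∩ V j).Nonempty

private def condU1 (m : ℕ) (A B : CL X) : Prop :=
  ∀ b ∈ B.carrier, ¬ near (NI X) m b → b ∈ A.carrier

private def condU2 (m : ℕ) (A B : CL X) : Prop :=
  ∀ T : Finset X, T ⊆ F m → (∀ a ∈ A.carrier, near (NI X) m a → a ∈ Wb m T) →
    ∀ x ∈ B.carrier, near (NI X) m x → x ∈ Wb m T

private def gfun (n : ℕ) (A : CL X) : Set (CL X) :=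
  {B | ∀ m ≤ n, condL V m A B ∧ condU1 m A B ∧ condU2 F m A B}

end Construction

section Main
variable {X : Type*} [MetricSpace X] [SecondCountableTopology X]

private theorem main_aux (hNI : IsCompact (NI X)) : QuasiMetrizable (CL X) := by
  classical
  -- countable basis
  obtain ⟨b, hbcount, hbne, hbbasis⟩ := exists_countable_basis X
  obtain ⟨V, hV⟩ : ∃ V : ℕ → Set X, insert ∅ b = range V :=
    (hbcount.insert ∅).exists_eq_range (insert_nonempty _ _)
  have hVopen : ∀ j, IsOpen (V j) := by
    intro j
    have : V j ∈ insert ∅ b := hV ▸ mem_range_self j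
    rcases this with h | h
    · rw [h]; exact isOpen_empty
    · exact hbbasis.isOpen h
  have hVbase : ∀ (x : X) (W : Set X), IsOpen W → x ∈ W → ∃ j, x ∈ V j ∧ V j ⊆ W := by
    intro x W hW hx
    obtain ⟨v, hvb, hxv, hvW⟩ := hbbasis.exists_subset_of_mem_open hx hW
    have : v ∈ range V := hV ▸ mem_insert_of_mem _ hvb
    obtain ⟨j, rfl⟩ := this
    exact ⟨j, hxv, hvW⟩
  -- finite nets of K := NI X
  have hFex : ∀ n : ℕ, ∃ Fn : Finset X, ∀ k ∈ NI X, ∃ f ∈ Fn, dist k f < (1/2:ℝ)^n := by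
    intro n
    obtain ⟨t, htfin, hcov⟩ := (Metric.totallyBounded_iff).mp hNI.totallyBounded
      ((1/2:ℝ)^n) (pow_half_pos n)
    refine ⟨htfin.toFinset, ?_⟩
    intro k hk
    obtain ⟨f, hf, hkf⟩ := mem_iUnion₂.mp (hcov hk)
    exact ⟨f, htfin.mem_toFinset.mpr hf, Metric.mem_ball.mp hkf⟩
  choose F hF using hFex
  -- the T* construction
  have hTstar : ∀ (m : ℕ) (S : Set X), ∃ T : Finset X, T ⊆ F m ∧
      (∀ a ∈ S, near (NI X) m a → a ∈ Wb m T) ∧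
      (∀ x ∈ Wb m T, ∃ a ∈ S, near (NI X) m a ∧ dist x a < 6*(1/2:ℝ)^m) := by
    intro m S
    refine ⟨(F m).filter (fun f => ∃ a ∈ S, near (NI X) m a ∧ dist a f < 2*(1/2:ℝ)^m),
      Finset.filter_subset _ _, ?_, ?_⟩
    · intro a haS hna
      obtain ⟨k, hkK, hak⟩ := hna
      obtain ⟨f, hfF, hkf⟩ := hF m k hkK
      have haf : dist a f < 2*(1/2:ℝ)^m := by
        calc dist a f ≤ dist a k + dist k f := dist_triangle a k f
          _ < (1/2:ℝ)^m + (1/2:ℝ)^m := by linarith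
          _ = 2*(1/2:ℝ)^m := by ring
      have hfT : f ∈ (F m).filter (fun f => ∃ a ∈ S, near (NI X) m a ∧ dist a f < 2*(1/2:ℝ)^m) :=
        Finset.mem_filter.mpr ⟨hfF, ⟨a, haS, ⟨k, hkK, hak⟩, haf⟩⟩
      refine mem_iUnion₂.mpr ⟨f, hfT, Metric.mem_ball.mpr ?_⟩
      have := pow_half_pos m
      linarith
    · intro x hx
      obtain ⟨f, hfT, hxf⟩ := mem_iUnion₂.mp hx
      rw [Metric.mem_ball] at hxf
      obtain ⟨-, a, haS, hna, haf⟩ := Finset.mem_filter.mp hfT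
      refine ⟨a, haS, hna, ?_⟩
      calc dist x a ≤ dist x f + dist f a := dist_triangle x f a
        _ = dist x f + dist a f := by rw [dist_comm f a]
        _ < 4*(1/2:ℝ)^m + 2*(1/2:ℝ)^m := by linarith
        _ = 6*(1/2:ℝ)^m := by ring
  -- the g-function
  set g : ℕ → CL X → Set (CL X) := gfun V F with hg
  have hganti : ∀ {m n : ℕ} (A : CL X), m ≤ n → g n A ⊆ g m A := by
    intro m n A h B hB m' hm'
    exact hB m' (hm'.trans h)
  apply quasiMetrizable_of_g g
  · -- hself
    intro n A m _
    exact ⟨fun j _ h => h, fun b hb _ => hb, fun T _ hcov x hx hnx => hcov x hx hnx⟩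
  · -- hanti
    exact hganti
  · -- htrans
    intro n A B hB C hC m hm
    obtain ⟨hL1, hU11, hU21⟩ := hB m hm
    obtain ⟨hL2, hU12, hU22⟩ := hC m hm
    refine ⟨fun j hj h => hL2 j hj (hL1 j hj h), fun c hc hnc => hU11 c (hU12 c hc hnc) hnc, ?_⟩
    intro T hT hcov x hx hnx
    exact hU22 T hT (fun a ha hna => hU21 T hT hcov a ha hna) x hx hnx
  · -- hsep
    intro A B hAB
    apply CL.ext'
    apply Subset.antisymm
    · intro x hx
      by_contra hxB
      obtain ⟨j, hxj, hjsub⟩ := hVbase x _ B.isClosed'.isOpen_compl hxB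
      obtain ⟨y, hyB, hyj⟩ := ((hAB j) j le_rfl).1 j le_rfl ⟨x, hx, hxj⟩
      exact (hjsub hyj) hyB
    · intro bb hbb
      by_cases hfar : ∃ m, ¬ near (NI X) m bb
      · obtain ⟨m, hm⟩ := hfar
        exact ((hAB m) m le_rfl).2.1 bb hbb hm
      · push_neg at hfar
        have hmem : ∀ m : ℕ, ∃ a ∈ A.carrier, dist bb a < 6*(1/2:ℝ)^m := by
          intro m
          obtain ⟨T, hTsub, hTcov, hTnear⟩ := hTstar m A.carrier
          have := ((hAB m) m le_rfl).2.2 T hTsub hTcov bb hbb (hfar m)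
          obtain ⟨a, haA, -, hd⟩ := hTnear bb this
          exact ⟨a, haA, hd⟩
        rw [← A.isClosed'.closure_eq]
        apply Metric.mem_closure_iff.mpr
        intro ε hε
        obtain ⟨m, hm⟩ := exists_pow_lt_of_lt_one (show (0:ℝ) < ε/6 by linarith)
          (by norm_num : (1/2:ℝ) < 1)
        obtain ⟨a, haA, hd⟩ := hmem m
        exact ⟨a, haA, by linarith⟩
  · -- hbase
    intro A s hs hA
    have hs' : TopologicalSpace.GenerateOpen
        ({S | ∃ U : Set X, IsOpen U ∧ S = {A : CL X | A.carrier ⊆ U}} ∪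
         {S | ∃ U : Set X, IsOpen U ∧ S = {A : CL X | (A.carrier ∩ U).Nonempty}}) s := hs
    clear hs
    induction hs' with
    | basic t ht =>
      rcases ht with ⟨U, hUopen, rfl⟩ | ⟨W, hWopen, rfl⟩
      · -- upper
        have hAU : A.carrier ⊆ U := hA
        -- choose radii around every point of X
        have hrad : ∀ k : X, ∃ e : ℝ, 0 < e ∧ (k ∈ A.carrier → Metric.ball k e ⊆ U) ∧
            (k ∉ A.carrier → ∀ y ∈ Metric.ball k e, y ∉ A.carrier) := by
          intro k
          by_cases hk : k ∈ A.carrier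
          · obtain ⟨e, he, hball⟩ := Metric.isOpen_iff.mp hUopen k (hAU hk)
            exact ⟨e, he, fun _ => hball, fun h => absurd hk h⟩
          · obtain ⟨e, he, hball⟩ := Metric.isOpen_iff.mp A.isClosed'.isOpen_compl k hk
            exact ⟨e, he, fun h => absurd h hk, fun _ y hy => hball hy⟩
        choose e he1 he2 he3 using hrad
        -- finite subcover of K
        have hcov : NI X ⊆ ⋃ k ∈ NI X, Metric.ball k (e k / 16) := by
          intro k hk
          exact mem_iUnion₂.mpr ⟨k, hk, Metric.mem_ball_self (by linarith [he1 k])⟩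
        obtain ⟨t, htK, htfin, htcov⟩ :=
          hNI.elim_finite_subcover_image (fun k _ => Metric.isOpen_ball) hcov
        -- a uniform lower bound for the radii on t
        obtain ⟨δ, hδpos, hδ⟩ : ∃ δ > 0, ∀ k ∈ t, δ ≤ e k := by
          rcases t.eq_empty_or_nonempty with rfl | hne
          · exact ⟨1, one_pos, by simp⟩
          · have hne' : htfin.toFinset.Nonempty := by
              rwa [Set.Finite.toFinset_nonempty]
            refine ⟨htfin.toFinset.inf' hne' e, ?_, ?_⟩
            · show (0:ℝ) < _
              rw [Finset.lt_inf'_iff]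
              intro k _
              exact he1 k
            · intro k hk
              exact Finset.inf'_le e (htfin.mem_toFinset.mpr hk)
        obtain ⟨n, hn⟩ := exists_pow_lt_of_lt_one (show (0:ℝ) < δ/16 by linarith)
          (by norm_num : (1/2:ℝ) < 1)
        refine ⟨n, ?_⟩
        intro B hB bb hbb
        obtain ⟨hL, hU1, hU2⟩ := hB n le_rfl
        by_cases hnb : near (NI X) n bb
        · obtain ⟨T, hTsub, hTcov, hTnear⟩ := hTstar n A.carrier
          obtain ⟨a, haA, hana, hdista⟩ := hTnear bb (hU2 T hTsub hTcov bb hbb hnb)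
          obtain ⟨k, hkK, hak⟩ := hana
          obtain ⟨ki, hkit, hkki⟩ := mem_iUnion₂.mp (htcov hkK)
          rw [Metric.mem_ball] at hkki
          have hδki : δ ≤ e ki := hδ ki hkit
          have hpow : (1/2:ℝ)^n < δ/16 := hn
          by_cases hkiA : ki ∈ A.carrier
          · apply he2 ki hkiA
            rw [Metric.mem_ball]
            calc dist bb ki ≤ dist bb a + dist a k + dist k ki := dist_triangle4 bb a k ki
              _ < 6*(1/2:ℝ)^n + (1/2:ℝ)^n + e ki / 16 := by linarith
              _ < e ki := by linarith
          · exfalso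
            apply he3 ki hkiA a _ haA
            rw [Metric.mem_ball]
            calc dist a ki ≤ dist a k + dist k ki := dist_triangle a k ki
              _ < (1/2:ℝ)^n + e ki / 16 := by linarith
              _ < e ki := by linarith
        · exact hAU (hU1 bb hbb hnb)
      · -- lower
        obtain ⟨x, hxA, hxW⟩ := hA
        obtain ⟨j, hxj, hjsub⟩ := hVbase x W hWopen hxW
        refine ⟨j, ?_⟩
        intro B hB
        obtain ⟨y, hyB, hyj⟩ := (hB j le_rfl).1 j le_rfl ⟨x, hxA, hxj⟩
        exact ⟨y, hyB, hjsub hyj⟩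
    | univ => exact ⟨0, fun B _ => mem_univ B⟩
    | inter t₁ t₂ h₁ h₂ ih₁ ih₂ =>
      obtain ⟨n₁, hn₁⟩ := ih₁ hA.1
      obtain ⟨n₂, hn₂⟩ := ih₂ hA.2
      exact ⟨max n₁ n₂, fun B hB =>
        ⟨hn₁ (hganti A (le_max_left n₁ n₂) hB), hn₂ (hganti A (le_max_right n₁ n₂) hB)⟩⟩
    | sUnion S hS ih =>
      obtain ⟨t, htS, hAt⟩ := hA
      obtain ⟨n, hn⟩ := ih t htS hAt
      exact ⟨n, fun B hB => ⟨t, htS, hn hB⟩⟩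
  · -- hnbhd
    intro n A
    have hupper : ∀ U : Set X, IsOpen U → IsOpen {B : CL X | B.carrier ⊆ U} := by
      intro U hU
      change TopologicalSpace.GenerateOpen _ {B : CL X | B.carrier ⊆ U}
      exact .basic _ (Or.inl ⟨U, hU, rfl⟩)
    have hlower : ∀ W : Set X, IsOpen W → IsOpen {B : CL X | (B.carrier ∩ W).Nonempty} := by
      intro W hW
      change TopologicalSpace.GenerateOpen _ _
      exact .basic _ (Or.inr ⟨W, hW, rfl⟩)
    set N : Set X := {x | ∃ k ∈ NI X, dist x k < (1/2:ℝ)^n} with hNdef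
    have hNopen : IsOpen N := by
      have h : N = ⋃ k ∈ NI X, Metric.ball k ((1/2:ℝ)^n) := by
        ext x
        simp [hNdef, Metric.mem_ball]
      rw [h]
      exact isOpen_biUnion fun _ _ => Metric.isOpen_ball
    have hANopen : IsOpen (A.carrier ∪ N) := by
      have heq : A.carrier ∪ N = N ∪ ⋃ x ∈ A.carrier ∩ (NI X)ᶜ, {x} := by
        ext y
        constructor
        · rintro (hy | hy)
          · by_cases hyK : y ∈ NI X
            · exact Or.inl ⟨y, hyK, by simpa [dist_self] using pow_half_pos n⟩
            · exact Or.inr (mem_biUnion (⟨hy, hyK⟩ : y ∈ A.carrier ∩ (NI X)ᶜ) rfl)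
          · exact Or.inl hy
        · rintro (hy | hy)
          · exact Or.inr hy
          · obtain ⟨x, hx, h⟩ := mem_iUnion₂.mp hy
            rw [mem_singleton_iff] at h
            subst h
            exact Or.inl hx.1
      rw [heq]
      refine hNopen.union (isOpen_biUnion ?_)
      intro x hx
      have h := hx.2
      simpa [NI] using h
    set O1 : Set (CL X) := {B | B.carrier ⊆ A.carrier ∪ N} with hO1
    set O2 : Set (CL X) := ⋂ j ∈ Finset.range (n+1),
      (if (A.carrier ∩ V j).Nonempty then {B : CL X | (B.carrier ∩ V j).Nonempty}
        else univ) with hO2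
    set O3 : Set (CL X) := ⋂ m ∈ Finset.range (n+1), ⋂ T ∈ (F m).powerset,
      (if (∀ a ∈ A.carrier, near (NI X) m a → a ∈ Wb m T) then
        {B : CL X | B.carrier ⊆ Wb m T ∪ {x | ¬ near (NI X) m x}} else univ) with hO3
    refine ⟨O1 ∩ O2 ∩ O3, ?_, ?_, ?_⟩
    · refine IsOpen.inter (IsOpen.inter ?_ ?_) ?_
      · exact hupper _ hANopen
      · apply isOpen_biInter_finset
        intro j _
        split
        · exact hlower _ (hVopen j)
        · exact isOpen_univ
      · apply isOpen_biInter_finset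
        intro m _
        apply isOpen_biInter_finset
        intro T _
        split
        · apply hupper
          refine (isOpen_Wb m T).union ?_
          have h := (isClosed_near hNI m).isOpen_compl
          have heq : {x : X | near (NI X) m x}ᶜ = {x : X | ¬ near (NI X) m x} := rfl
          rwa [heq] at h
        · exact isOpen_univ
    · -- A ∈ O1 ∩ O2 ∩ O3
      refine ⟨⟨fun x hx => Or.inl hx, ?_⟩, ?_⟩
      · apply mem_iInter₂.mpr
        intro j _
        split
        · next h => exact h
        · exact mem_univ _
      · apply mem_iInter₂.mpr
        intro m _
        apply mem_iInter₂.mpr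
        intro T _
        split
        · next h =>
          intro x hx
          by_cases hnx : near (NI X) m x
          · exact Or.inl (h x hx hnx)
          · exact Or.inr hnx
        · exact mem_univ _
    · -- O ⊆ g n A
      rintro B ⟨⟨hB1, hB2⟩, hB3⟩ m hm
      refine ⟨?_, ?_, ?_⟩
      · intro j hj hAVj
        have hjr : j ∈ Finset.range (n+1) := Finset.mem_range.mpr (Nat.lt_succ_of_le (hj.trans hm))
        have h2 := mem_iInter₂.mp hB2 j hjr
        rwa [if_pos hAVj] at h2
      · intro bb hbb hnb
        rcases hB1 hbb with h | h
        · exact h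
        · exfalso
          obtain ⟨k, hk, hd⟩ := h
          exact hnb ⟨k, hk, (le_of_lt hd).trans (pow_half_anti hm)⟩
      · intro T hT hcov x hx hnx
        have hmr : m ∈ Finset.range (n+1) := Finset.mem_range.mpr (Nat.lt_succ_of_le hm)
        have h3 := mem_iInter₂.mp (mem_iInter₂.mp hB3 m hmr) T (Finset.mem_powerset.mpr hT)
        rw [if_pos hcov] at h3
        rcases h3 hx with h | h
        · exact h
        · exact absurd hnx h

end Main

theorem quasiMetrizable_CL_vietoris {X : Type*} [TopologicalSpace X]
    [TopologicalSpace.SeparableSpace X] [TopologicalSpace.MetrizableSpace X]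
    (hNI : IsCompact (NI X)) :
    QuasiMetrizable (CL X) := by
  letI : MetricSpace X := TopologicalSpace.metrizableSpaceMetric X
  haveI : SecondCountableTopology X := UniformSpace.secondCountable_of_separable X
  exact main_aux hNI
end

section
/- If X is a quasi-metrizable space, then the hyperspace F(X) of nonempty finite subsets of X, with the subspace Vietoris topology, is quasi-metrizable. -/
open Set TopologicalSpace

namespace QMFAux

variable {X : Type*}

noncomputable def infd (d : X → X → ℝ) (a : X) (B : Set X) : ℝ := sInf (d a '' B)

noncomputable def supInf (d : X → X → ℝ) (A B : Set X) : ℝ :=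
  sSup ((fun a => infd d a B) '' A)

lemma infd_le (d : X → X → ℝ) {a b : X} {B : Set X} (hB : B.Finite) (hb : b ∈ B) :
    infd d a B ≤ d a b :=
  csInf_le (hB.image _).bddBelow ⟨b, hb, rfl⟩

lemma infd_attained (d : X → X → ℝ) (a : X) {B : Set X} (hB : B.Finite) (hne : B.Nonempty) :
    ∃ b ∈ B, infd d a B = d a b := by
  obtain ⟨b, hb, h⟩ := (hne.image (d a)).csInf_mem (hB.image _)
  exact ⟨b, hb, h.symm⟩

lemma infd_nonneg {d : X → X → ℝ} (h0 : ∀ x y, 0 ≤ d x y) (a : X) {B : Set X}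
    (hne : B.Nonempty) : 0 ≤ infd d a B :=
  le_csInf (hne.image _) (by rintro _ ⟨b, _, rfl⟩; exact h0 a b)

lemma le_supInf (d : X → X → ℝ) {A B : Set X} {a : X} (hA : A.Finite) (ha : a ∈ A) :
    infd d a B ≤ supInf d A B :=
  le_csSup (hA.image _).bddAbove ⟨a, ha, rfl⟩

lemma supInf_le (d : X → X → ℝ) {A B : Set X} {c : ℝ} (hA : A.Nonempty)
    (h : ∀ a ∈ A, infd d a B ≤ c) : supInf d A B ≤ c :=
  csSup_le (hA.image _) (by rintro _ ⟨a, ha, rfl⟩; exact h a ha)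

lemma supInf_lt (d : X → X → ℝ) {A B : Set X} {ε : ℝ} (hA : A.Finite) (hne : A.Nonempty)
    (h : ∀ a ∈ A, infd d a B < ε) : supInf d A B < ε := by
  obtain ⟨a, ha, he⟩ := (hne.image (fun a => infd d a B)).csSup_mem (hA.image _)
  rw [supInf, ← he]
  exact h a ha

lemma supInf_nonneg {d : X → X → ℝ} (h0 : ∀ x y, 0 ≤ d x y) {A B : Set X}
    (hA : A.Finite) (hAne : A.Nonempty) (hBne : B.Nonempty) : 0 ≤ supInf d A B := by
  obtain ⟨a, ha⟩ := hAne
  exact le_trans (infd_nonneg h0 a hBne) (le_supInf d hA ha)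

lemma supInf_self {d : X → X → ℝ} (h0 : ∀ x y, 0 ≤ d x y) (heq : ∀ x y, d x y = 0 ↔ x = y)
    {A : Set X} (hA : A.Finite) (hAne : A.Nonempty) : supInf d A A = 0 := by
  refine le_antisymm (supInf_le d hAne fun a ha => ?_) (supInf_nonneg h0 hA hAne hAne)
  calc infd d a A ≤ d a a := infd_le d hA ha
  _ = 0 := (heq a a).2 rfl

lemma supInf_tri {d : X → X → ℝ} (htri : ∀ x y z, d x z ≤ d x y + d y z)
    {A B C : Set X} (hA : A.Finite) (hAne : A.Nonempty) (hB : B.Finite) (hBne : B.Nonempty)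
    (hC : C.Finite) (hCne : C.Nonempty) :
    supInf d A C ≤ supInf d A B + supInf d B C := by
  refine supInf_le d hAne fun a ha => ?_
  obtain ⟨b, hb, hab⟩ := infd_attained d a hB hBne
  obtain ⟨c, hc, hbc⟩ := infd_attained d b hC hCne
  calc infd d a C ≤ d a c := infd_le d hC hc
  _ ≤ d a b + d b c := htri a b c
  _ = infd d a B + infd d b C := by rw [hab, hbc]
  _ ≤ supInf d A B + supInf d B C := add_le_add (le_supInf d hA ha) (le_supInf d hB hb)

lemma CL.ext' [TopologicalSpace X] {A B : CL X} (h : A.carrier = B.carrier) : A = B := by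
  cases A; cases B; simpa using h

/-- The Hausdorff-type quasi-metric on the finite hyperspace. -/
noncomputable def dF [TopologicalSpace X] (d : X → X → ℝ)
    (A B : {A : CL X // A.carrier.Finite}) : ℝ :=
  max (supInf d A.1.carrier B.1.carrier)
      (supInf (fun x y => d y x) B.1.carrier A.1.carrier)

lemma ball_open [TopologicalSpace X] {d : X → X → ℝ}
    (htri : ∀ x y z, d x z ≤ d x y + d y z)
    (htop : ∀ s : Set X, IsOpen s ↔ ∀ x ∈ s, ∃ ε > 0, {y | d x y < ε} ⊆ s)
    (x : X) (ε : ℝ) : IsOpen {y | d x y < ε} := by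
  rw [htop]
  intro y hy
  refine ⟨ε - d x y, by simpa using hy, fun z hz => ?_⟩
  simp only [mem_setOf_eq] at hz ⊢
  linarith [htri x y z]

lemma isOpen_CL_iff [TopologicalSpace X] {t : Set (CL X)} :
    IsOpen t ↔ GenerateOpen
      ({S | ∃ U : Set X, IsOpen U ∧ S = {A : CL X | A.carrier ⊆ U}} ∪
       {S | ∃ U : Set X, IsOpen U ∧ S = {A : CL X | (A.carrier ∩ U).Nonempty}}) t :=
  Iff.rfl

lemma key1 [TopologicalSpace X] {d : X → X → ℝ}
    (htop : ∀ s : Set X, IsOpen s ↔ ∀ x ∈ s, ∃ ε > 0, {y | d x y < ε} ⊆ s)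
    {t : Set (CL X)} (ht : IsOpen t) :
    ∀ A : {A : CL X // A.carrier.Finite}, A.1 ∈ t →
      ∃ ε > 0, ∀ B : {A : CL X // A.carrier.Finite}, dF d A B < ε → B.1 ∈ t := by
  rw [isOpen_CL_iff] at ht
  induction ht with
  | basic u hu =>
    rcases hu with ⟨U, hU, rfl⟩ | ⟨U, hU, rfl⟩
    · intro A hA
      have hfin := A.2
      have hne := A.1.nonempty'
      have H : ∀ a ∈ A.1.carrier, ∃ ε > 0, {y | d a y < ε} ⊆ U :=
        fun a ha => (htop U).1 hU a (hA ha)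
      choose! ε hpos hsub using H
      set E := hfin.toFinset with hE
      have hEne : E.Nonempty := by
        rw [hE, Set.Finite.toFinset_nonempty]; exact hne
      refine ⟨E.inf' hEne ε, ?_, ?_⟩
      · rw [gt_iff_lt, Finset.lt_inf'_iff]
        intro a ha
        exact hpos a (by rwa [hE, Set.Finite.mem_toFinset] at ha)
      · intro B hB
        show B.1.carrier ⊆ U
        intro b hb
        have h2 : supInf (fun x y => d y x) B.1.carrier A.1.carrier < E.inf' hEne ε :=
          lt_of_le_of_lt (le_max_right _ _) hB
        have h3 := lt_of_le_of_lt (le_supInf _ B.2 hb) h2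
        obtain ⟨a, haA, haeq⟩ := infd_attained (fun x y => d y x) b hfin hne
        have haE : a ∈ E := by rw [hE, Set.Finite.mem_toFinset]; exact haA
        have : d a b < ε a :=
          lt_of_lt_of_le (haeq ▸ h3) (Finset.inf'_le ε haE)
        exact hsub a haA this
    · intro A hA
      obtain ⟨a, haA, haU⟩ := hA
      obtain ⟨ε, hε, hsub⟩ := (htop U).1 hU a haU
      refine ⟨ε, hε, fun B hB => ?_⟩
      have h1 : supInf d A.1.carrier B.1.carrier < ε :=
        lt_of_le_of_lt (le_max_left _ _) hB
      have h2 := lt_of_lt_of_le (lt_of_le_of_lt (le_supInf d A.2 haA) h1) le_rfl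
      obtain ⟨b, hb, heq⟩ := infd_attained d a B.2 B.1.nonempty'
      exact ⟨b, hb, hsub (by simp only [mem_setOf_eq]; rw [← heq]; exact h2)⟩
  | univ => exact fun A _ => ⟨1, one_pos, fun B _ => trivial⟩
  | inter u v _ _ ihu ihv =>
    intro A hA
    obtain ⟨ε1, h1, H1⟩ := ihu A hA.1
    obtain ⟨ε2, h2, H2⟩ := ihv A hA.2
    exact ⟨min ε1 ε2, lt_min h1 h2, fun B hB =>
      ⟨H1 B (lt_of_lt_of_le hB (min_le_left _ _)),
       H2 B (lt_of_lt_of_le hB (min_le_right _ _))⟩⟩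
  | sUnion S _ ih =>
    intro A hA
    obtain ⟨t, htS, hAt⟩ := hA
    obtain ⟨ε, hε, H⟩ := ih t htS A hAt
    exact ⟨ε, hε, fun B hB => ⟨t, htS, H B hB⟩⟩

lemma key2 [TopologicalSpace X] {d : X → X → ℝ}
    (heq0 : ∀ x y, d x y = 0 ↔ x = y)
    (htri : ∀ x y z, d x z ≤ d x y + d y z)
    (htop : ∀ s : Set X, IsOpen s ↔ ∀ x ∈ s, ∃ ε > 0, {y | d x y < ε} ⊆ s)
    {s : Set {A : CL X // A.carrier.Finite}}
    (H : ∀ A ∈ s, ∃ ε > 0, ∀ B, dF d A B < ε → B ∈ s) : IsOpen s := by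
  choose! ε hεpos hball using H
  rw [isOpen_induced_iff]
  refine ⟨⋃ A ∈ s, ({C : CL X | C.carrier ⊆ ⋃ a ∈ A.1.carrier, {y | d a y < ε A}} ∩
      ⋂ a ∈ A.1.carrier, {C : CL X | (C.carrier ∩ {y | d a y < ε A}).Nonempty}), ?_, ?_⟩
  · refine isOpen_biUnion fun A hA => IsOpen.inter ?_ ?_
    · rw [isOpen_CL_iff]
      exact GenerateOpen.basic _ (Or.inl ⟨_,
        isOpen_biUnion fun a _ => ball_open htri htop a (ε A), rfl⟩)
    · refine A.2.isOpen_biInter fun a _ => ?_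
      rw [isOpen_CL_iff]
      exact GenerateOpen.basic _ (Or.inr ⟨_, ball_open htri htop a (ε A), rfl⟩)
  · ext B
    simp only [mem_preimage, mem_iUnion, mem_inter_iff, mem_iInter, mem_setOf_eq]
    constructor
    · rintro ⟨A, hAs, hsub, hint⟩
      refine hball A hAs B ?_
      have hεA := hεpos A hAs
      refine max_lt ?_ ?_
      · refine supInf_lt d A.2 A.1.nonempty' fun a ha => ?_
        obtain ⟨b, hbB, hbd⟩ := hint a ha
        exact lt_of_le_of_lt (infd_le d B.2 hbB) hbd
      · refine supInf_lt _ B.2 B.1.nonempty' fun b hb => ?_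
        obtain ⟨a, ha, hab⟩ := mem_iUnion₂.1 (hsub hb)
        exact lt_of_le_of_lt (infd_le (fun x y => d y x) A.2 ha) hab
    · intro hBs
      have hεB := hεpos B hBs
      have hzero : ∀ a : X, d a a < ε B := fun a => by
        rw [(heq0 a a).2 rfl]; exact hεB
      exact ⟨B, hBs, fun b hb => mem_iUnion₂.2 ⟨b, hb, hzero b⟩,
        fun a ha => ⟨a, ha, hzero a⟩⟩

end QMFAux

open QMFAux in
theorem quasiMetrizable_finite_hyperspace {X : Type*} [TopologicalSpace X] [T1Space X]
    (hX : QuasiMetrizable X) :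
    QuasiMetrizable {A : CL X // A.carrier.Finite} := by
  obtain ⟨d, ⟨h0, heq0, htri⟩, htop⟩ := hX
  have h0' : ∀ x y : X, 0 ≤ (fun x y => d y x) x y := fun x y => h0 y x
  have htri' : ∀ x y z : X, (fun x y => d y x) x z ≤
      (fun x y => d y x) x y + (fun x y => d y x) y z := fun x y z => by
    simpa [add_comm] using htri z y x
  refine ⟨dF d, ⟨?_, ?_, ?_⟩, ?_⟩
  · intro A B
    exact le_trans (supInf_nonneg h0 A.2 A.1.nonempty' B.1.nonempty') (le_max_left _ _)
  · intro A B
    constructor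
    · intro h
      have h1 : supInf d A.1.carrier B.1.carrier = 0 :=
        le_antisymm (le_trans (le_max_left _ _) h.le)
          (supInf_nonneg h0 A.2 A.1.nonempty' B.1.nonempty')
      have h2 : supInf (fun x y => d y x) B.1.carrier A.1.carrier = 0 :=
        le_antisymm (le_trans (le_max_right _ _) h.le)
          (supInf_nonneg h0' B.2 B.1.nonempty' A.1.nonempty')
      have hAB : A.1.carrier ⊆ B.1.carrier := by
        intro a ha
        obtain ⟨b, hb, hab⟩ := infd_attained d a B.2 B.1.nonempty'
        have : d a b ≤ 0 := hab ▸ h1 ▸ le_supInf d A.2 ha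
        have : d a b = 0 := le_antisymm this (h0 a b)
        rwa [(heq0 a b).1 this]
      have hBA : B.1.carrier ⊆ A.1.carrier := by
        intro b hb
        obtain ⟨a, ha, hab⟩ := infd_attained (fun x y => d y x) b A.2 A.1.nonempty'
        have : d a b ≤ 0 := hab ▸ h2 ▸ le_supInf _ B.2 hb
        have : d a b = 0 := le_antisymm this (h0 a b)
        have := (heq0 a b).1 this
        rwa [← this]
      exact Subtype.ext (CL.ext' (Subset.antisymm hAB hBA))
    · rintro rfl
      rw [dF, supInf_self h0 heq0 A.2 A.1.nonempty',
        supInf_self h0' (fun x y => by rw [heq0]; exact eq_comm) A.2 A.1.nonempty']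
      simp
  · intro A B C
    have t1 : supInf d A.1.carrier C.1.carrier ≤ dF d A B + dF d B C := by
      refine le_trans (supInf_tri htri A.2 A.1.nonempty' B.2 B.1.nonempty'
        C.2 C.1.nonempty') (add_le_add (le_max_left _ _) (le_max_left _ _))
    have t2 : supInf (fun x y => d y x) C.1.carrier A.1.carrier ≤ dF d A B + dF d B C := by
      refine le_trans (supInf_tri htri' C.2 C.1.nonempty' B.2 B.1.nonempty'
        A.2 A.1.nonempty') ?_
      rw [add_comm (dF d A B)]
      exact add_le_add (le_max_right _ _) (le_max_right _ _)
    exact max_le t1 t2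
  · intro s
    constructor
    · intro hs
      rw [isOpen_induced_iff] at hs
      obtain ⟨t, ht, rfl⟩ := hs
      intro A hA
      obtain ⟨ε, hε, H⟩ := key1 htop ht A hA
      exact ⟨ε, hε, fun B hB => H B hB⟩
    · intro H
      refine key2 heq0 htri htop fun A hA => ?_
      obtain ⟨ε, hε, hb⟩ := H A hA
      exact ⟨ε, hε, fun B hB => hb hB⟩
end

section
/- For any topological space X, the Vietoris topology and the locally finite topology coincide on the set K(X) of nonempty compact subsets of X; that is, (K(X), τ_V) is homeomorphic to (K(X), τ_locfin) via the identity map. -/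
open Set TopologicalSpace

/-- The hyperspace of nonempty compact subsets of `X`. -/
structure KX (X : Type*) [TopologicalSpace X] where
  carrier : Set X
  nonempty' : carrier.Nonempty
  isCompact' : IsCompact carrier

/-- The Vietoris topology on `KX X`. -/
def vietorisTopK (X : Type*) [TopologicalSpace X] : TopologicalSpace (KX X) :=
  generateFrom
    ({S | ∃ U : Set X, IsOpen U ∧ S = {A : KX X | A.carrier ⊆ U}} ∪
     {S | ∃ U : Set X, IsOpen U ∧ S = {A : KX X | (A.carrier ∩ U).Nonempty}})

/-- The locally finite topology on `KX X`. -/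
def locFinTopK (X : Type*) [TopologicalSpace X] : TopologicalSpace (KX X) :=
  generateFrom
    ({S | ∃ U : Set X, IsOpen U ∧ S = {A : KX X | A.carrier ⊆ U}} ∪
     {S | ∃ 𝒰 : Set (Set X), (∀ U ∈ 𝒰, IsOpen U) ∧
        LocallyFinite (fun U : 𝒰 => (U : Set X)) ∧
        S = {A : KX X | ∀ U ∈ 𝒰, (A.carrier ∩ U).Nonempty}})

theorem vietorisTopK_eq_locFinTopK (X : Type*) [TopologicalSpace X] :
    vietorisTopK X = locFinTopK X := by
  apply le_antisymm
  · -- every locFin generator is Vietoris-open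
    letI : TopologicalSpace (KX X) := vietorisTopK X
    apply le_generateFrom
    rintro S (⟨U, hU, rfl⟩ | ⟨𝒰, h𝒰, hlf, rfl⟩)
    · exact GenerateOpen.basic _ (Or.inl ⟨U, hU, rfl⟩)
    · by_cases hS : ∃ A : KX X, ∀ U ∈ 𝒰, (A.carrier ∩ U).Nonempty
      · obtain ⟨A, hA⟩ := hS
        have hfin : 𝒰.Finite := by
          have h1 := hlf.finite_nonempty_inter_compact A.isCompact'
          have h2 : (Set.univ : Set ↥𝒰).Finite := by
            refine h1.subset ?_
            rintro ⟨U, hU⟩ -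
            simpa [Set.inter_comm] using hA U hU
          haveI : Finite ↥𝒰 := Set.finite_univ_iff.mp h2
          exact Set.toFinite 𝒰
        have heq : {A : KX X | ∀ U ∈ 𝒰, (A.carrier ∩ U).Nonempty} =
            ⋂ U ∈ 𝒰, {A : KX X | (A.carrier ∩ U).Nonempty} := by
          ext B; simp
        rw [heq]
        exact hfin.isOpen_biInter fun U hU =>
          GenerateOpen.basic _ (Or.inr ⟨U, h𝒰 U hU, rfl⟩)
      · have heq : {A : KX X | ∀ U ∈ 𝒰, (A.carrier ∩ U).Nonempty} = ∅ := by
          ext B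
          simp only [Set.mem_setOf_eq, Set.mem_empty_iff_false, iff_false]
          exact fun h => hS ⟨B, h⟩
        rw [heq]; exact isOpen_empty
  · -- every Vietoris generator is locFin-open
    apply le_generateFrom
    rintro S (⟨U, hU, rfl⟩ | ⟨U, hU, rfl⟩)
    · exact GenerateOpen.basic _ (Or.inl ⟨U, hU, rfl⟩)
    · have heq : {A : KX X | (A.carrier ∩ U).Nonempty} =
          {A : KX X | ∀ V ∈ ({U} : Set (Set X)), (A.carrier ∩ V).Nonempty} := by
        ext B; simp
      rw [heq]
      exact GenerateOpen.basic _ (Or.inr ⟨{U}, by simpa using hU,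
        locallyFinite_of_finite _, rfl⟩)
end

section
/- If X is a countably compact Hausdorff space, then on CL(X) the Vietoris topology coincides with the locally finite topology. -/
open Set TopologicalSpace

def locFinTop (X : Type*) [TopologicalSpace X] : TopologicalSpace (CL X) :=
  generateFrom
    ({S | ∃ U : Set X, IsOpen U ∧ S = {A : CL X | A.carrier ⊆ U}} ∪
     {S | ∃ 𝒰 : Set (Set X), (∀ U ∈ 𝒰, IsOpen U) ∧
        LocallyFinite (fun U : 𝒰 => (U : Set X)) ∧
        S = {A : CL X | ∀ U ∈ 𝒰, (A.carrier ∩ U).Nonempty}})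

lemma lf_finite {X : Type*} [TopologicalSpace X] [T2Space X]
    (hX : CountablyCompactSet (Set.univ : Set X))
    {ι : Type*} {f : ι → Set X} (hlf : LocallyFinite f) (hne : ∀ i, (f i).Nonempty) :
    Finite ι := by
  by_contra h
  rw [not_finite_iff_infinite] at h
  obtain e := Infinite.natEmbedding ι
  set g : ℕ → Set X := fun n => f (e n) with hg
  have hglf : LocallyFinite g := hlf.comp_injective e.injective
  choose x hx using fun n => hne (e n)
  -- fibers of x are finite
  have hfib : ∀ z : X, {n | x n = z}.Finite := by
    intro z
    obtain ⟨V, hV, hVf⟩ := hglf z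
    refine hVf.subset fun n hn => ?_
    exact ⟨z, hn ▸ hx n, mem_of_mem_nhds hV⟩
  have hR : (range x).Infinite := by
    intro hfin
    have : (⋃ z ∈ range x, {n | x n = z}).Finite :=
      hfin.biUnion fun z _ => hfib z
    have huniv : (⋃ z ∈ range x, {n | x n = z}) = univ := by
      ext n
      simp only [mem_iUnion, mem_setOf_eq, mem_univ, iff_true]
      exact ⟨x n, ⟨n, rfl⟩, rfl⟩
    rw [huniv] at this
    exact Set.infinite_univ this
  obtain yemb := hR.natEmbedding
  set y : ℕ → X := fun n => (yemb n : X) with hy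
  have hyinj : Function.Injective y := fun a b hab => yemb.injective (Subtype.ext hab)
  have hmem : ∀ n, y n ∈ range x := fun n => (yemb n).2
  choose m hm using hmem
  -- y n = x (m n)
  have hym : ∀ n, x (m n) = y n := hm
  -- family of singletons is locally finite
  have hsing : LocallyFinite (fun n => ({y n} : Set X)) := by
    intro z
    obtain ⟨V, hV, hVf⟩ := hglf z
    refine ⟨V, hV, ?_⟩
    have hsub : {n | ({y n} ∩ V).Nonempty} ⊆ m ⁻¹' {k | (g k ∩ V).Nonempty} := by
      intro n hn
      obtain ⟨w, hw1, hw2⟩ := hn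
      simp only [mem_singleton_iff] at hw1
      subst hw1
      exact ⟨y n, by rw [← hym n]; exact hx (m n), hw2⟩
    have hminj : Function.Injective m := by
      intro a b hab
      apply hyinj
      rw [← hym a, ← hym b, hab]
    exact (hVf.preimage hminj.injOn).subset hsub
  -- images of y are closed
  have hcl : ∀ s : Set ℕ, IsClosed (y '' s) := by
    intro s
    have himg : y '' s = ⋃ n : s, {y (n : ℕ)} := by
      ext z; simp [eq_comm]
    rw [himg]
    exact (hsing.comp_injective Subtype.val_injective).isClosed_iUnion
      fun _ => isClosed_singleton
  -- cover
  set F : ℕ → Set X := fun n => (y '' {k | n ≤ k})ᶜ with hF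
  have hFopen : ∀ n, IsOpen (F n) := fun n => (hcl _).isOpen_compl
  have hFcov : (univ : Set X) ⊆ ⋃ n, F n := by
    intro z _
    by_cases hz : z ∈ range y
    · obtain ⟨k, rfl⟩ := hz
      refine mem_iUnion.2 ⟨k + 1, ?_⟩
      intro hk
      obtain ⟨j, hj, hjk⟩ := hk
      have h2 := hyinj hjk
      simp only [mem_setOf_eq] at hj
      omega
    · refine mem_iUnion.2 ⟨0, ?_⟩
      intro hk
      obtain ⟨j, _, hjk⟩ := hk
      exact hz ⟨j, hjk⟩
  obtain ⟨t, ht⟩ := hX F hFopen hFcov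
  set K := t.sup id with hK
  have : y K ∈ ⋃ n ∈ t, F n := ht (mem_univ _)
  obtain ⟨n, hn, hyn⟩ := mem_iUnion₂.1 this
  exact hyn ⟨K, Finset.le_sup (f := id) hn, rfl⟩

theorem vietorisTop_eq_locFinTop_of_countablyCompact
    {X : Type*} [TopologicalSpace X] [T2Space X]
    (hX : CountablyCompactSet (Set.univ : Set X)) :
    vietorisTop X = locFinTop X := by
  apply le_antisymm
  · -- vietorisTop ≤ locFinTop: locFin generators are Vietoris-open
    rw [locFinTop]
    letI : TopologicalSpace (CL X) := vietorisTop X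
    refine le_generateFrom ?_
    rintro S (⟨U, hU, rfl⟩ | ⟨𝒰, h𝒰, hlf, rfl⟩)
    · exact isOpen_generateFrom_of_mem (Or.inl ⟨U, hU, rfl⟩)
    · by_cases hemp : ∅ ∈ 𝒰
      · have : {A : CL X | ∀ U ∈ 𝒰, (A.carrier ∩ U).Nonempty} = ∅ := by
          ext A
          simp only [mem_setOf_eq, mem_empty_iff_false, iff_false, not_forall]
          exact ⟨∅, hemp, by simp⟩
        rw [this]
        exact isOpen_empty
      · have hfin : 𝒰.Finite := by
          rw [← Set.finite_coe_iff]
          exact lf_finite hX hlf fun U =>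
            nonempty_iff_ne_empty.2 fun h => hemp (h ▸ U.2)
        have : {A : CL X | ∀ U ∈ 𝒰, (A.carrier ∩ U).Nonempty} =
            ⋂ U ∈ 𝒰, {A : CL X | (A.carrier ∩ U).Nonempty} := by
          ext A; simp
        rw [this]
        exact hfin.isOpen_biInter fun U hU =>
          isOpen_generateFrom_of_mem (Or.inr ⟨U, h𝒰 U hU, rfl⟩)
  · -- locFinTop ≤ vietorisTop: Vietoris generators are locFin-open
    rw [vietorisTop]
    letI : TopologicalSpace (CL X) := locFinTop X
    refine le_generateFrom ?_
    rintro S (⟨U, hU, rfl⟩ | ⟨U, hU, rfl⟩)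
    · exact isOpen_generateFrom_of_mem (Or.inl ⟨U, hU, rfl⟩)
    · have : {A : CL X | (A.carrier ∩ U).Nonempty} =
          {A : CL X | ∀ V ∈ ({U} : Set (Set X)), (A.carrier ∩ V).Nonempty} := by
        ext A; simp
      rw [this]
      exact isOpen_generateFrom_of_mem
        (Or.inr ⟨{U}, by simpa using hU, locallyFinite_of_finite _, rfl⟩)
end

section
/- If X is a cosmic space (countable network) that is countably compact, then X is compact and metrizable. -/
open Set TopologicalSpace

def HasCountableNetwork (Y : Type*) [TopologicalSpace Y] : Prop :=
  ∃ N : Set (Set Y), N.Countable ∧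
    ∀ y : Y, ∀ U : Set Y, IsOpen U → y ∈ U → ∃ s ∈ N, y ∈ s ∧ s ⊆ U

lemma generateOpen_of_forall_exists {X : Type*} (S : Set (Set X)) (W : Set X)
    (h : ∀ x ∈ W, ∃ G, G ⊆ W ∧ TopologicalSpace.GenerateOpen S G ∧ x ∈ G) :
    TopologicalSpace.GenerateOpen S W := by
  have hW : W = ⋃₀ {G | G ⊆ W ∧ TopologicalSpace.GenerateOpen S G} := by
    apply Set.Subset.antisymm
    · intro x hx
      obtain ⟨G, h1, h2, h3⟩ := h x hx
      exact ⟨G, ⟨h1, h2⟩, h3⟩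
    · rintro x ⟨G, ⟨h1, -⟩, hx⟩
      exact h1 hx
  rw [hW]
  exact TopologicalSpace.GenerateOpen.sUnion _ fun G hG => hG.2

lemma generateOpen_biInter_finset {X ι : Type*} (S : Set (Set X)) (F : Finset ι) (f : ι → Set X)
    (h : ∀ y ∈ F, TopologicalSpace.GenerateOpen S (f y)) :
    TopologicalSpace.GenerateOpen S (⋂ y ∈ F, f y) := by
  classical
  induction F using Finset.induction_on with
  | empty => simpa using TopologicalSpace.GenerateOpen.univ
  | @insert a F ha ih =>
      rw [Finset.set_biInter_insert]
      exact (h _ (Finset.mem_insert_self _ _)).inter _ _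
        (ih fun y hy => h y (Finset.mem_insert_of_mem hy))

theorem compact_metrizable_of_cosmic_countablyCompact
    {X : Type*} [TopologicalSpace X] [T2Space X]
    (hnet : HasCountableNetwork X) (hcc : CountablyCompactSet (Set.univ : Set X)) :
    CompactSpace X ∧ TopologicalSpace.MetrizableSpace X := by
  classical
  obtain ⟨N0, hN0c, hN0⟩ := hnet
  -- Step 1: compactness
  have hcomp : IsCompact (Set.univ : Set X) := by
    refine isCompact_of_finite_subcover fun {ι} U hUo hUc => ?_
    rcases isEmpty_or_nonempty X with hX | hX
    · exact ⟨∅, fun x _ => absurd trivial (hX.elim x)⟩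
    · have hTc : {A ∈ N0 | ∃ i, A ⊆ U i}.Countable := hN0c.mono (sep_subset _ _)
      have hTne : {A ∈ N0 | ∃ i, A ⊆ U i}.Nonempty := by
        obtain ⟨x⟩ := hX
        obtain ⟨i, hi⟩ := mem_iUnion.1 (hUc (mem_univ x))
        obtain ⟨A, hA, _, hAU⟩ := hN0 x (U i) (hUo i) hi
        exact ⟨A, hA, i, hAU⟩
      obtain ⟨g, hg⟩ := hTc.exists_eq_range hTne
      have hgT : ∀ n, ∃ i, g n ⊆ U i := by
        intro n
        have hmem : g n ∈ {A ∈ N0 | ∃ i, A ⊆ U i} := hg ▸ mem_range_self n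
        exact hmem.2
      choose h hh using hgT
      have hcov : (Set.univ : Set X) ⊆ ⋃ n, U (h n) := by
        intro x _
        obtain ⟨i, hi⟩ := mem_iUnion.1 (hUc (mem_univ x))
        obtain ⟨A, hA, hxA, hAU⟩ := hN0 x (U i) (hUo i) hi
        have hAT : A ∈ {A ∈ N0 | ∃ i, A ⊆ U i} := ⟨hA, i, hAU⟩
        rw [hg] at hAT
        obtain ⟨n, rfl⟩ := hAT
        exact mem_iUnion.2 ⟨n, hh n hxA⟩
      obtain ⟨t, ht⟩ := hcc (fun n => U (h n)) (fun n => hUo (h n)) hcov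
      refine ⟨t.image h, fun x _ => ?_⟩
      obtain ⟨n, hn, hx⟩ := mem_iUnion₂.1 (ht (mem_univ x))
      exact mem_iUnion₂.2 ⟨h n, Finset.mem_image_of_mem h hn, hx⟩
  haveI : CompactSpace X := ⟨hcomp⟩
  -- Step 2: a countable network of closed sets
  set N : Set (Set X) := closure '' N0 with hNdef
  have hNc : N.Countable := hN0c.image _
  have hNcl : ∀ A ∈ N, IsClosed A := by rintro A ⟨B, -, rfl⟩; exact isClosed_closure
  have hN : ∀ x : X, ∀ U : Set X, IsOpen U → x ∈ U → ∃ A ∈ N, x ∈ A ∧ A ⊆ U := by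
    intro x U hU hx
    obtain ⟨V, hV, hVc, hVU⟩ := exists_mem_nhds_isClosed_subset (hU.mem_nhds hx)
    obtain ⟨B, hB, hxB, hBV⟩ :=
      hN0 x (interior V) isOpen_interior (mem_interior_iff_mem_nhds.2 hV)
    refine ⟨closure B, mem_image_of_mem _ hB, subset_closure hxB, ?_⟩
    exact ((closure_mono hBV).trans
      ((closure_mono interior_subset).trans hVc.closure_eq.subset)).trans hVU
  -- Step 3: separating opens for disjoint pairs from the network
  set P : Set (Set X × Set X) := {p | p.1 ∈ N ∧ p.2 ∈ N ∧ Disjoint p.1 p.2} with hPdef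
  have hPc : P.Countable := (hNc.prod hNc).mono fun p hp => mem_prod.2 ⟨hp.1, hp.2.1⟩
  have hsep : ∀ p ∈ P, ∃ u v : Set X,
      IsOpen u ∧ IsOpen v ∧ p.1 ⊆ u ∧ p.2 ⊆ v ∧ Disjoint u v := fun p hp =>
    SeparatedNhds.of_isCompact_isCompact ((hNcl _ hp.1).isCompact)
      ((hNcl _ hp.2.1).isCompact) hp.2.2
  choose! UU VV hUUo hVVo hsub1 hsub2 hdis using hsep
  set S : Set (Set X) := (UU '' P) ∪ (VV '' P) with hSdef
  have hSc : S.Countable := (hPc.image _).union (hPc.image _)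
  have hSo : ∀ s ∈ S, IsOpen s := by
    rintro s (⟨p, hp, rfl⟩ | ⟨p, hp, rfl⟩)
    exacts [hUUo p hp, hVVo p hp]
  -- Step 4: S generates the topology
  have key : (‹TopologicalSpace X› : TopologicalSpace X) = generateFrom S := by
    refine le_antisymm (le_generateFrom hSo) ?_
    rw [TopologicalSpace.le_def]
    intro W hW
    show TopologicalSpace.GenerateOpen S W
    refine generateOpen_of_forall_exists S W fun x hxW => ?_
    have hK : IsCompact Wᶜ := hW.isClosed_compl.isCompact
    have hy : ∀ y ∈ Wᶜ, ∃ p ∈ P, x ∈ UU p ∧ y ∈ VV p := by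
      intro y hyW
      have hxy : x ≠ y := fun hEq => hyW (hEq ▸ hxW)
      obtain ⟨O1, O2, hO1, hO2, hx1, hy2, hdisO⟩ := t2_separation hxy
      obtain ⟨A, hA, hxA, hAO⟩ := hN x O1 hO1 hx1
      obtain ⟨B, hB, hyB, hBO⟩ := hN y O2 hO2 hy2
      have hpP : (A, B) ∈ P := ⟨hA, hB, hdisO.mono hAO hBO⟩
      exact ⟨(A, B), hpP, hsub1 _ hpP hxA, hsub2 _ hpP hyB⟩
    choose! pp hppP hppU hppV using hy
    obtain ⟨F, hF⟩ := hK.elim_finite_subcover (fun y : ↥Wᶜ => VV (pp y))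
      (fun y => hVVo _ (hppP y y.2))
      (fun z hz => mem_iUnion.2 ⟨⟨z, hz⟩, hppV z hz⟩)
    refine ⟨⋂ y ∈ F, UU (pp y), ?_, ?_, ?_⟩
    · intro z hz
      by_contra hzW
      obtain ⟨y, hyF, hzV⟩ := mem_iUnion₂.1 (hF hzW)
      exact (hdis _ (hppP y y.2)).ne_of_mem (mem_iInter₂.1 hz y hyF) hzV rfl
    · exact generateOpen_biInter_finset S F _ fun y _ =>
        TopologicalSpace.GenerateOpen.basic _ (Or.inl ⟨pp y, hppP y y.2, rfl⟩)
    · exact mem_iInter₂.2 fun y _ => hppU y y.2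
  haveI : SecondCountableTopology X := ⟨⟨S, hSc, key⟩⟩
  exact ⟨‹CompactSpace X›, inferInstance⟩
end
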